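/- For every n ≥ 0 and all x, y ∈ T^d, K_n(dν; x, y) = K_n(W_κ; x, y) − [M / (1 + M(A_n − B_n))] Σ_{i=1}^{d+1} K_n(W_κ; x, e_i) K_n(W_κ; y, e_i) + [M² B_n / ((1 + M(A_n − B_n)) (1 + M A_n + d M B_n))] · (Σ_{i=1}^{d+1} K_n(W_κ; x, e_i)) · (Σ_{i=1}^{d+1} K_n(W_κ; y, e_i)). -/

import Mathlib

open MeasureTheory MvPolynomial Finset Filter Topology

noncomputable section

/-- The standard simplex `T^d = {x : x_i ≥ 0, 1 - x_1 - ⋯ - x_d ≥ 0}`. -/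
def simplexT (d : ℕ) : Set (Fin d → ℝ) :=
  {x | (∀ i, 0 ≤ x i) ∧ ∑ i, x i ≤ 1}

/-- The barycentric coordinates `x_1, …, x_d, 1 - |x|_1` of a point of `ℝ^d`. -/
def bary {d : ℕ} (x : Fin d → ℝ) (i : Fin (d + 1)) : ℝ :=
  if h : (i : ℕ) < d then x ⟨i, h⟩ else 1 - ∑ j, x j

/-- The vertices `e_1, …, e_d` (standard basis) and `e_{d+1} = 0` of `T^d`. -/
def vertex (d : ℕ) (i : Fin (d + 1)) : Fin d → ℝ :=
  fun j => if (j : ℕ) = (i : ℕ) then 1 else 0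

/-- The Jacobi weight
`W_κ(x) = x_1^{κ_1-1/2} ⋯ x_d^{κ_d-1/2} (1-|x|_1)^{κ_{d+1}-1/2}` on `T^d`. -/
def jacobiW {d : ℕ} (κ : Fin (d + 1) → ℝ) (x : Fin d → ℝ) : ℝ :=
  ∏ i, bary x i ^ (κ i - 1 / 2)

/-- The normalizing constant `w_κ = Γ(|κ| + (d+1)/2) / (Γ(κ_1+1/2)⋯Γ(κ_{d+1}+1/2))`. -/
def wConst {d : ℕ} (κ : Fin (d + 1) → ℝ) : ℝ :=
  Real.Gamma ((∑ i, κ i) + (d + 1) / 2) / ∏ i, Real.Gamma (κ i + 1 / 2)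

/-- The inner product `⟨f, g⟩ = w_κ ∫_{T^d} f g W_κ dx`. -/
def simpInner {d : ℕ} (κ : Fin (d + 1) → ℝ) (f g : MvPolynomial (Fin d) ℝ) : ℝ :=
  wConst κ * ∫ x in simplexT d, eval x f * eval x g * jacobiW κ x

/-- The Pochhammer symbol `(a)_n = a (a+1) ⋯ (a+n-1)`. -/
def pochh (a : ℝ) (n : ℕ) : ℝ := ∏ j ∈ Finset.range n, (a + j)

/-- The generalized binomial coefficient `C(x, m) = x (x-1) ⋯ (x-m+1) / m!`. -/
def genBinom (x : ℝ) (m : ℕ) : ℝ :=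
  (∏ j ∈ Finset.range m, (x - (j : ℝ))) / m.factorial

/-- The Jacobi polynomial
`P_n^{(a,b)}(t) = Σ_{k=0}^n C(n+a, n-k) C(n+b, k) ((t-1)/2)^k ((t+1)/2)^{n-k}`. -/
def jacobiP (a b : ℝ) (n : ℕ) (t : ℝ) : ℝ :=
  ∑ k ∈ Finset.range (n + 1),
    genBinom (n + a) (n - k) * genBinom (n + b) k *
      ((t - 1) / 2) ^ k * ((t + 1) / 2) ^ (n - k)

/-- The space `Π_n^d` of real polynomials in `d` variables of total degree `≤ n`. -/
def piDeg (d n : ℕ) : Submodule ℝ (MvPolynomial (Fin d) ℝ) :=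
  MvPolynomial.restrictTotalDegree (Fin d) ℝ n

/-- The inner product `⟨f, g⟩_ν = w_κ ∫_{T^d} f g W_κ dx + M Σ_{i=1}^{d+1} f(e_i) g(e_i)`. -/
def simpInnerNu {d : ℕ} (κ : Fin (d + 1) → ℝ) (M : ℝ)
    (f g : MvPolynomial (Fin d) ℝ) : ℝ :=
  simpInner κ f g + M * ∑ i, eval (vertex d i) f * eval (vertex d i) g


/-- The inner product `simpInner` is symmetric. -/
lemma simpInner_symm {d : ℕ} (κ : Fin (d + 1) → ℝ) (f g : MvPolynomial (Fin d) ℝ) :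
    simpInner κ f g = simpInner κ g f := by
  unfold simpInner
  congr 1
  congr 1
  funext x
  ring

/-- Summing `c i` against a kernel that is `A` on the diagonal and `B` off it. -/
lemma sum_ite_kernel {m : ℕ} (c : Fin m → ℝ) (j : Fin m) (A B : ℝ) :
    ∑ i, c i * (if i = j then A else B) = c j * (A - B) + B * ∑ i, c i := by
  have h : ∀ i ∈ Finset.univ, c i * (if i = j then A else B)
      = (if i = j then c i * (A - B) else 0) + c i * B := by
    intro i _; split_ifs <;> ring
  rw [Finset.sum_congr rfl h, Finset.sum_add_distrib,
    Finset.sum_ite_eq' Finset.univ j (fun i => c i * (A - B)), ← Finset.sum_mul]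
  simp [mul_comm]

/-- For every `n ≥ 0` and all `x, y ∈ T^d`,
`K_n(dν; x, y) = K_n(W_κ; x, y)
  − [M/(1 + M(A_n − B_n))] Σ_i K_n(W_κ; x, e_i) K_n(W_κ; y, e_i)
  + [M² B_n/((1 + M(A_n − B_n))(1 + M A_n + d M B_n))]
    (Σ_i K_n(W_κ; x, e_i)) (Σ_i K_n(W_κ; y, e_i))`. -/
theorem kernel_nu_simplex_formula
    {d : ℕ} (hd : 1 ≤ d) (ς : ℝ) (hς : 0 ≤ ς) (M : ℝ) (hM : 0 < M)
    (Kmu : ℕ → (Fin d → ℝ) → MvPolynomial (Fin d) ℝ)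
    (hKmuMem : ∀ n x, Kmu n x ∈ piDeg d n)
    (hKmuRep : ∀ n x, ∀ p ∈ piDeg d n,
      simpInner (fun _ : Fin (d + 1) => ς) (Kmu n x) p = eval x p)
    (Knu : ℕ → (Fin d → ℝ) → MvPolynomial (Fin d) ℝ)
    (hKnuMem : ∀ n x, Knu n x ∈ piDeg d n)
    (hKnuRep : ∀ n x, ∀ p ∈ piDeg d n,
      simpInnerNu (fun _ : Fin (d + 1) => ς) M (Knu n x) p = eval x p)
    (A B : ℕ → ℝ)
    (hA : ∀ n (i : Fin (d + 1)), eval (vertex d i) (Kmu n (vertex d i)) = A n)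
    (hB : ∀ n (i j : Fin (d + 1)), i ≠ j →
      eval (vertex d j) (Kmu n (vertex d i)) = B n)
    (n : ℕ) (x : Fin d → ℝ) (hx : x ∈ simplexT d)
    (y : Fin d → ℝ) (hy : y ∈ simplexT d) :
    eval y (Knu n x) =
      eval y (Kmu n x) -
        (M / (1 + M * (A n - B n))) *
          ∑ i, eval (vertex d i) (Kmu n x) * eval (vertex d i) (Kmu n y) +
        (M ^ 2 * B n /
            ((1 + M * (A n - B n)) * (1 + M * A n + d * M * B n))) *
          (∑ i, eval (vertex d i) (Kmu n x)) *
          (∑ i, eval (vertex d i) (Kmu n y)) := by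
  set κ : Fin (d + 1) → ℝ := fun _ => ς with hκ
  -- Key identity from the two reproducing properties
  have key : ∀ x' y' : Fin d → ℝ, eval y' (Knu n x') =
      eval y' (Kmu n x') -
        M * ∑ i, eval (vertex d i) (Knu n x') * eval (vertex d i) (Kmu n y') := by
    intro x' y'
    have h1 := hKmuRep n y' (Knu n x') (hKnuMem n x')
    have h2 := hKnuRep n x' (Kmu n y') (hKmuMem n y')
    have h3 := hKmuRep n x' (Kmu n y') (hKmuMem n y')
    have h4 := hKmuRep n y' (Kmu n x') (hKmuMem n x')
    have hs1 : simpInner κ (Kmu n y') (Knu n x') = simpInner κ (Knu n x') (Kmu n y') :=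
      simpInner_symm κ _ _
    have hs2 : simpInner κ (Kmu n y') (Kmu n x') = simpInner κ (Kmu n x') (Kmu n y') :=
      simpInner_symm κ _ _
    unfold simpInnerNu at h2
    linarith [h1, h2, h3, h4]
  -- Kernel values at vertices
  have kv : ∀ (x' : Fin d → ℝ) (i : Fin (d + 1)),
      eval (vertex d i) (Kmu n x') = eval (vertex d i) (Kmu n x') := fun _ _ => rfl
  have kvv : ∀ i j : Fin (d + 1), eval (vertex d j) (Kmu n (vertex d i)) =
      if j = i then A n else B n := by
    intro i j
    split_ifs with h
    · subst h; exact hA n j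
    · exact hB n i j fun hij => h hij.symm
  -- Linear system for the vertex values of `Knu`
  have eq1 : ∀ (x' : Fin d → ℝ) (j : Fin (d + 1)),
      (1 + M * (A n - B n)) * eval (vertex d j) (Knu n x') =
        eval (vertex d j) (Kmu n x') -
          M * B n * ∑ i, eval (vertex d i) (Knu n x') := by
    intro x' j
    have h := key x' (vertex d j)
    have hsum : ∑ i, eval (vertex d i) (Knu n x') * eval (vertex d i) (Kmu n (vertex d j)) =
        eval (vertex d j) (Knu n x') * (A n - B n) +
          B n * ∑ i, eval (vertex d i) (Knu n x') := by
      rw [Finset.sum_congr rfl (fun i _ => by rw [kvv j i])]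
      exact sum_ite_kernel _ j (A n) (B n)
    rw [hsum] at h
    linarith [h]
  have eq2 : ∀ x' : Fin d → ℝ,
      (1 + M * A n + d * M * B n) * ∑ i, eval (vertex d i) (Knu n x') =
        ∑ i, eval (vertex d i) (Kmu n x') := by
    intro x'
    have h : ∑ j, (1 + M * (A n - B n)) * eval (vertex d j) (Knu n x') =
        ∑ j, (eval (vertex d j) (Kmu n x') -
          M * B n * ∑ i, eval (vertex d i) (Knu n x')) :=
      Finset.sum_congr rfl fun j _ => eq1 x' j
    rw [← Finset.mul_sum, Finset.sum_sub_distrib, Finset.sum_const] at h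
    simp only [Finset.card_univ, Fintype.card_fin, nsmul_eq_mul] at h
    push_cast at h
    ring_nf at h ⊢
    linarith [h]
  -- A + d * B from the sum of kernel values at a vertex
  have sumAB : ∀ i0 : Fin (d + 1),
      ∑ j, eval (vertex d j) (Kmu n (vertex d i0)) = A n + d * B n := by
    intro i0
    rw [Finset.sum_congr rfl (fun j _ => by
      rw [kvv i0 j, show (if j = i0 then A n else B n) = (1 : ℝ) * (if j = i0 then A n else B n) by ring])]
    rw [sum_ite_kernel (fun _ => (1 : ℝ)) i0 (A n) (B n)]
    simp only [Finset.sum_const, Finset.card_univ, Fintype.card_fin, nsmul_eq_mul, mul_one]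
    push_cast
    ring
  -- Nonvanishing of the first denominator
  have hD1 : 1 + M * (A n - B n) ≠ 0 := by
    intro h0
    have e0 := eq1 (vertex d ⟨0, by omega⟩) ⟨0, by omega⟩
    have e1 := eq1 (vertex d ⟨0, by omega⟩) ⟨1, by omega⟩
    rw [h0, zero_mul] at e0 e1
    rw [kvv ⟨0, by omega⟩ ⟨0, by omega⟩] at e0
    rw [kvv ⟨0, by omega⟩ ⟨1, by omega⟩] at e1
    have hne : (⟨1, by omega⟩ : Fin (d + 1)) ≠ ⟨0, by omega⟩ := by
      simp [Fin.ext_iff]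
    simp only [if_pos rfl, if_neg hne, if_true] at e0 e1
    have hAB : A n = B n := by linarith
    rw [hAB] at h0
    simp at h0
  -- Nonvanishing of the second denominator
  have hD2 : 1 + M * A n + d * M * B n ≠ 0 := by
    intro h0
    have e := eq2 (vertex d ⟨0, by omega⟩)
    rw [h0, zero_mul, sumAB] at e
    have h1 : (1 : ℝ) = 0 := by linear_combination h0 + M * e
    exact one_ne_zero h1
  -- Put everything together
  set u : Fin (d + 1) → ℝ := fun i => eval (vertex d i) (Knu n x) with hu
  set v : Fin (d + 1) → ℝ := fun i => eval (vertex d i) (Kmu n x) with hv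
  set w : Fin (d + 1) → ℝ := fun i => eval (vertex d i) (Kmu n y) with hw
  have e1 : (1 + M * (A n - B n)) * ∑ i, u i * w i =
      (∑ i, v i * w i) - M * B n * (∑ i, u i) * (∑ i, w i) := by
    rw [Finset.mul_sum]
    rw [Finset.sum_congr rfl (fun i _ => by
      rw [← mul_assoc, eq1 x i, sub_mul])]
    rw [Finset.sum_sub_distrib, ← Finset.mul_sum]
  have e2 : (1 + M * A n + d * M * B n) * ∑ i, u i = ∑ i, v i := eq2 x
  have hkey := key x y
  rw [hkey]
  have hSu : ∑ i, u i = (∑ i, v i) / (1 + M * A n + d * M * B n) := by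
    rw [eq_div_iff hD2]
    linarith [e2]
  have hSseq : ∑ i, u i * w i =
      ((∑ i, v i * w i) - M * B n * ((∑ i, v i) / (1 + M * A n + d * M * B n)) * (∑ i, w i)) /
        (1 + M * (A n - B n)) := by
    rw [← hSu]
    field_simp
    linarith [e1]
  rw [hSseq]
  field_simp
  ring
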